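/- Let X = [X_1; …; X_n] and Y = [Y_1; …; Y_n] in R^{nd×d} with each block invertible and σ_min(X_i) ≥ c, σ_min(Y_i) ≥ c for all i and some c > 0. Then for any Q ∈ O(d), √(Σ_i ‖P(X_i) − P((YQ)_i)‖_F²) ≤ (4/(2c)) · 2 · ‖X − YQ‖_F; in particular, d_F(P_n(X), P_n(Y)) ≤ (4/c)·d_F(X,Y), where P_n projects each block to its polar factor. -/

import Mathlib

open Matrix BigOperators

noncomputable def frob {m n : Type*} [Fintype m] [Fintype n] (A : Matrix m n ℝ) : ℝ :=
  Real.sqrt (∑ i, ∑ j, (A i j) ^ 2)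

def IsOrtho {d : ℕ} (Q : Matrix (Fin d) (Fin d) ℝ) : Prop :=
  Q * Qᵀ = 1 ∧ Qᵀ * Q = 1

noncomputable def dF {m : Type*} [Fintype m] {d : ℕ}
    (X Y : Matrix m (Fin d) ℝ) : ℝ :=
  sInf {r : ℝ | ∃ Q : Matrix (Fin d) (Fin d) ℝ, IsOrtho Q ∧ r = frob (X - Y * Q)}

def blk {n d : ℕ} (X : Matrix (Fin n × Fin d) (Fin d) ℝ) (i : Fin n) :
    Matrix (Fin d) (Fin d) ℝ :=
  Matrix.of fun a b => X (i, a) b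

noncomputable def sv {d : ℕ} (A : Matrix (Fin d) (Fin d) ℝ) (i : Fin d) : ℝ :=
  Real.sqrt ((show (Aᵀ * A).IsHermitian from
    Matrix.isHermitian_conjTranspose_mul_self A).eigenvalues i)

noncomputable def smin {d : ℕ} (A : Matrix (Fin d) (Fin d) ℝ) : ℝ :=
  ⨅ i, sv A i

/-- Polar factor `P(M) = M (MᵀM)^{−1/2}`. -/
noncomputable def polar {d : ℕ} (M : Matrix (Fin d) (Fin d) ℝ) :
    Matrix (Fin d) (Fin d) ℝ :=
  M * (((Matrix.posSemidef_conjTranspose_mul_self M).1.eigenvectorUnitary : Matrix (Fin d) (Fin d) ℝ) *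
    Matrix.diagonal (Real.sqrt ∘ (Matrix.posSemidef_conjTranspose_mul_self M).1.eigenvalues) *
    (star (Matrix.posSemidef_conjTranspose_mul_self M).1.eigenvectorUnitary : Matrix (Fin d) (Fin d) ℝ))⁻¹

/-- Blockwise polar projection `P_n`. -/
noncomputable def Pn {n d : ℕ} (X : Matrix (Fin n × Fin d) (Fin d) ℝ) :
    Matrix (Fin n × Fin d) (Fin d) ℝ :=
  Matrix.of fun p b => polar (blk X p.1) p.2 b

namespace PnAux

variable {d : ℕ}

lemma frob_nonneg {m n : Type*} [Fintype m] [Fintype n] (A : Matrix m n ℝ) : 0 ≤ frob A :=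
  Real.sqrt_nonneg _

lemma frob_sq {m n : Type*} [Fintype m] [Fintype n] (A : Matrix m n ℝ) :
    frob A ^ 2 = ∑ i, ∑ j, (A i j) ^ 2 :=
  Real.sq_sqrt (by positivity)

lemma sum_sq_eq_trace (A : Matrix (Fin d) (Fin d) ℝ) :
    ∑ i, ∑ j, (A i j) ^ 2 = (Aᵀ * A).trace := by
  simp only [Matrix.trace, Matrix.diag, Matrix.mul_apply, Matrix.transpose_apply, sq]
  rw [Finset.sum_comm]

lemma frob_eq_trace (A : Matrix (Fin d) (Fin d) ℝ) :
    frob A = Real.sqrt ((Aᵀ * A).trace) := by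
  rw [frob, sum_sq_eq_trace]

lemma frob_transpose (A : Matrix (Fin d) (Fin d) ℝ) : frob Aᵀ = frob A := by
  unfold frob
  rw [Finset.sum_comm]
  simp [Matrix.transpose_apply]

/-- Frobenius norm is invariant under `M ↦ Pᵀ M V` with `P, V` orthogonal. -/
lemma frob_conj (P M V : Matrix (Fin d) (Fin d) ℝ)
    (hP : P * Pᵀ = 1) (hV : V * Vᵀ = 1) :
    frob (Pᵀ * M * V) = frob M := by
  rw [frob_eq_trace, frob_eq_trace]
  congr 1
  have h1 : (Pᵀ * M * V)ᵀ * (Pᵀ * M * V) = Vᵀ * (Mᵀ * M) * V := by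
    simp only [Matrix.transpose_mul, Matrix.transpose_transpose, Matrix.mul_assoc]
    rw [show P * (Pᵀ * (M * V)) = (P * Pᵀ) * (M * V) by rw [Matrix.mul_assoc], hP, one_mul]
  rw [h1, Matrix.mul_assoc, Matrix.trace_mul_comm, Matrix.mul_assoc, hV, Matrix.mul_one]

lemma ortho_flip {P : Matrix (Fin d) (Fin d) ℝ} (h : Pᵀ * P = 1) : P * Pᵀ = 1 :=
  mul_eq_one_comm.mp h

/-- Core abstract inequality: for SVD factors with singular values `≥ c`,
`‖U₁V₁ᵀ − U₂V₂ᵀ‖_F ≤ (1/c)‖A − B‖_F`. -/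
lemma svd_bound (c : ℝ) (hc : 0 < c) (U₁ V₁ U₂ V₂ : Matrix (Fin d) (Fin d) ℝ)
    (σ₁ σ₂ : Fin d → ℝ)
    (hU₁ : U₁ᵀ * U₁ = 1) (hV₁ : V₁ᵀ * V₁ = 1)
    (hU₂ : U₂ᵀ * U₂ = 1) (hV₂ : V₂ᵀ * V₂ = 1)
    (hσ₁ : ∀ i, c ≤ σ₁ i) (hσ₂ : ∀ i, c ≤ σ₂ i) :
    frob (U₁ * V₁ᵀ - U₂ * V₂ᵀ) ≤
      (1/c) * frob (U₁ * Matrix.diagonal σ₁ * V₁ᵀ - U₂ * Matrix.diagonal σ₂ * V₂ᵀ) := by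
  have hU₁' := ortho_flip hU₁
  have hV₁' := ortho_flip hV₁
  have hU₂' := ortho_flip hU₂
  have hV₂' := ortho_flip hV₂
  set E : Matrix (Fin d) (Fin d) ℝ :=
    U₁ * Matrix.diagonal σ₁ * V₁ᵀ - U₂ * Matrix.diagonal σ₂ * V₂ᵀ with hE
  set Z : Matrix (Fin d) (Fin d) ℝ := V₁ᵀ * V₂ - U₁ᵀ * U₂ with hZdef
  set F : Matrix (Fin d) (Fin d) ℝ := U₁ᵀ * E * V₂ with hFdef
  set G : Matrix (Fin d) (Fin d) ℝ := V₁ᵀ * Eᵀ * U₂ with hGdef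
  have c1 : ∀ X : Matrix (Fin d) (Fin d) ℝ, U₁ᵀ * (U₁ * X) = X := fun X => by
    rw [← Matrix.mul_assoc, hU₁, one_mul]
  have c2 : ∀ X : Matrix (Fin d) (Fin d) ℝ, V₁ᵀ * (V₁ * X) = X := fun X => by
    rw [← Matrix.mul_assoc, hV₁, one_mul]
  -- key Sylvester identity
  have hkey : Matrix.diagonal σ₁ * Z + Z * Matrix.diagonal σ₂ = F - G := by
    rw [hFdef, hGdef, hZdef, hE]
    simp only [Matrix.transpose_sub, Matrix.transpose_mul, Matrix.transpose_transpose,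
      Matrix.diagonal_transpose, Matrix.mul_sub, Matrix.sub_mul, Matrix.mul_assoc,
      c1, c2, hU₂, hV₂, Matrix.mul_one, mul_one]
    abel
  have hent : ∀ i j, (σ₁ i + σ₂ j) * Z i j = F i j - G i j := by
    intro i j
    have h := congrFun (congrFun hkey i) j
    simpa [Matrix.add_apply, Matrix.sub_apply, Matrix.diagonal_mul, Matrix.mul_diagonal,
      add_mul, mul_comm] using h
  have hZsq : ∀ i j, Z i j ^ 2 ≤ (F i j ^ 2 + G i j ^ 2) / (2 * c ^ 2) := by
    intro i j
    have h1 := hent i j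
    have h2 : 2 * c ≤ σ₁ i + σ₂ j := by linarith [hσ₁ i, hσ₂ j]
    rw [le_div_iff₀ (by positivity)]
    have h3 : 0 ≤ (σ₁ i + σ₂ j - 2*c) * (σ₁ i + σ₂ j + 2*c) * Z i j ^ 2 :=
      mul_nonneg (mul_nonneg (by linarith) (by linarith)) (sq_nonneg _)
    have h4 : ((σ₁ i + σ₂ j) * Z i j) ^ 2 = (F i j - G i j) ^ 2 := by rw [h1]
    nlinarith [sq_nonneg (F i j + G i j)]
  -- sum the entrywise bound
  have hsum : frob Z ^ 2 ≤ (frob F ^ 2 + frob G ^ 2) / (2 * c ^ 2) := by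
    rw [frob_sq, frob_sq, frob_sq]
    calc ∑ i, ∑ j, Z i j ^ 2
        ≤ ∑ i, ∑ j, (F i j ^ 2 + G i j ^ 2) / (2 * c ^ 2) :=
          Finset.sum_le_sum fun i _ => Finset.sum_le_sum fun j _ => hZsq i j
      _ = ((∑ i, ∑ j, F i j ^ 2) + ∑ i, ∑ j, G i j ^ 2) / (2 * c ^ 2) := by
          rw [← Finset.sum_add_distrib]
          simp only [Finset.sum_div, ← Finset.sum_add_distrib]
  have hF : frob F = frob E := frob_conj _ _ _ hU₁' hV₂'
  have hG : frob G = frob E := by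
    rw [hGdef, frob_conj _ _ _ hV₁' hU₂', frob_transpose]
  have hZfrob : frob Z = frob (U₁ * V₁ᵀ - U₂ * V₂ᵀ) := by
    have : U₁ᵀ * (U₁ * V₁ᵀ - U₂ * V₂ᵀ) * V₂ = Z := by
      rw [hZdef]
      simp only [Matrix.mul_sub, Matrix.sub_mul, Matrix.mul_assoc, c1, hV₂, Matrix.mul_one,
        mul_one]
    rw [← this, frob_conj _ _ _ hU₁' hV₂']
  have hEc : frob Z ^ 2 ≤ ((1/c) * frob E) ^ 2 := by
    rw [hF, hG] at hsum
    have hc2 : (0:ℝ) < c ^ 2 := by positivity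
    calc frob Z ^ 2 ≤ (frob E ^ 2 + frob E ^ 2) / (2 * c ^ 2) := hsum
      _ = ((1/c) * frob E) ^ 2 := by field_simp; ring
  have := Real.sqrt_le_sqrt hEc
  rw [Real.sqrt_sq (frob_nonneg _),
    Real.sqrt_sq (mul_nonneg (by positivity) (frob_nonneg _))] at this
  rw [← hZfrob]
  exact this

open scoped MatrixOrder in
/-- If `M = U (diag g) Vᵀ` with `U, V` orthogonal and `g > 0`, then `polar M = U Vᵀ`. -/
lemma polar_of_svd (M U V : Matrix (Fin d) (Fin d) ℝ) (g : Fin d → ℝ)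
    (hU : Uᵀ * U = 1) (hV : Vᵀ * V = 1)
    (hM : M = U * Matrix.diagonal g * Vᵀ) (hg : ∀ i, 0 < g i) :
    polar M = U * Vᵀ := by
  have hV' := ortho_flip hV
  have hgg : Matrix.diagonal g * Matrix.diagonal (fun i => (g i)⁻¹) = 1 := by
    rw [Matrix.diagonal_mul_diagonal]
    have : (fun i => g i * (g i)⁻¹) = fun _ : Fin d => (1:ℝ) :=
      funext fun i => mul_inv_cancel₀ (hg i).ne'
    rw [this, Matrix.diagonal_one]
  have hgg' : Matrix.diagonal (fun i => (g i)⁻¹) * Matrix.diagonal g = 1 := by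
    rw [Matrix.diagonal_mul_diagonal]
    have : (fun i => (g i)⁻¹ * g i) = fun _ : Fin d => (1:ℝ) :=
      funext fun i => inv_mul_cancel₀ (hg i).ne'
    rw [this, Matrix.diagonal_one]
  set S : Matrix (Fin d) (Fin d) ℝ := V * Matrix.diagonal g * Vᵀ with hS
  have hSpsd : S.PosSemidef := by
    have h1 : (Matrix.diagonal g).PosSemidef :=
      Matrix.posSemidef_diagonal_iff.mpr fun i => (hg i).le
    have := h1.mul_mul_conjTranspose_same V
    rwa [Matrix.conjTranspose_eq_transpose_of_trivial] at this
  have c2 : ∀ X : Matrix (Fin d) (Fin d) ℝ, Vᵀ * (V * X) = X := fun X => by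
    rw [← Matrix.mul_assoc, hV, one_mul]
  have hsq : S ^ 2 = Mᴴ * M := by
    rw [Matrix.conjTranspose_eq_transpose_of_trivial, hM, pow_two, hS]
    have c1U : ∀ X : Matrix (Fin d) (Fin d) ℝ, Uᵀ * (U * X) = X := fun X => by
      rw [← Matrix.mul_assoc, hU, one_mul]
    simp only [Matrix.transpose_mul, Matrix.transpose_transpose, Matrix.diagonal_transpose,
      Matrix.mul_assoc, c2, c1U]
  have hsqrt : S = ((Matrix.posSemidef_conjTranspose_mul_self M).1.eigenvectorUnitary : Matrix (Fin d) (Fin d) ℝ) *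
      Matrix.diagonal (Real.sqrt ∘ (Matrix.posSemidef_conjTranspose_mul_self M).1.eigenvalues) *
      (star (Matrix.posSemidef_conjTranspose_mul_self M).1.eigenvectorUnitary : Matrix (Fin d) (Fin d) ℝ) := by
    have e1 : ((Matrix.posSemidef_conjTranspose_mul_self M).1.eigenvectorUnitary : Matrix (Fin d) (Fin d) ℝ) *
        Matrix.diagonal (Real.sqrt ∘ (Matrix.posSemidef_conjTranspose_mul_self M).1.eigenvalues) *
        (star (Matrix.posSemidef_conjTranspose_mul_self M).1.eigenvectorUnitary : Matrix (Fin d) (Fin d) ℝ) =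
        cfc Real.sqrt (Mᴴ * M) := by
      rw [(Matrix.posSemidef_conjTranspose_mul_self M).1.cfc_eq, Matrix.IsHermitian.cfc,
        Unitary.conjStarAlgAut_apply, RCLike.ofReal_real_eq_id, Function.id_comp]
    rw [e1, ← cfcₙ_eq_cfc (hf := Real.continuous_sqrt.continuousOn) (hf0 := Real.sqrt_zero),
      ← CFC.sqrt_eq_real_sqrt (Mᴴ * M) (Matrix.posSemidef_conjTranspose_mul_self M).nonneg]
    exact (CFC.sqrt_unique (by rw [← pow_two]; exact hsq) hSpsd.nonneg).symm
  have hSinv : S⁻¹ = V * Matrix.diagonal (fun i => (g i)⁻¹) * Vᵀ := by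
    apply Matrix.inv_eq_right_inv
    rw [hS]
    simp only [Matrix.mul_assoc, c2]
    rw [show Matrix.diagonal g * (Matrix.diagonal (fun i => (g i)⁻¹) * Vᵀ) = Vᵀ by
      rw [← Matrix.mul_assoc, hgg, one_mul]]
    exact hV'
  rw [polar, ← hsqrt, hSinv, hM]
  simp only [Matrix.mul_assoc, c2]
  rw [show Matrix.diagonal g * (Matrix.diagonal (fun i => (g i)⁻¹) * Vᵀ) = Vᵀ by
    rw [← Matrix.mul_assoc, hgg, one_mul]]

/-- SVD existence for a matrix with positive singular values. -/
lemma svd_exists (A : Matrix (Fin d) (Fin d) ℝ) (h : ∀ i, 0 < sv A i) :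
    ∃ U V : Matrix (Fin d) (Fin d) ℝ,
      Uᵀ * U = 1 ∧ Vᵀ * V = 1 ∧ A = U * Matrix.diagonal (sv A) * Vᵀ := by
  classical
  set hH := (show (Aᵀ * A).IsHermitian from
    Matrix.isHermitian_conjTranspose_mul_self A) with hHdef
  set V : Matrix (Fin d) (Fin d) ℝ := (hH.eigenvectorUnitary : Matrix (Fin d) (Fin d) ℝ)
    with hVdef
  have hVmem := hH.eigenvectorUnitary.2
  rw [Unitary.mem_iff] at hVmem
  have hVstar1 : star V * V = 1 := hVmem.1
  have hV1 : Vᵀ * V = 1 := by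
    rwa [Matrix.star_eq_conjTranspose, Matrix.conjTranspose_eq_transpose_of_trivial] at hVstar1
  have hV1' : V * Vᵀ = 1 := ortho_flip hV1
  have hlamnn : ∀ i, 0 ≤ hH.eigenvalues i := fun i =>
    Matrix.eigenvalues_conjTranspose_mul_self_nonneg A i
  have hAT : Aᴴ = Aᵀ := Matrix.conjTranspose_eq_transpose_of_trivial A
  have hVT : Vᴴ = Vᵀ := Matrix.conjTranspose_eq_transpose_of_trivial V
  have hspec : Aᵀ * A = V * Matrix.diagonal hH.eigenvalues * Vᵀ := by
    have h0 := hH.spectral_theorem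
    rw [Unitary.conjStarAlgAut_apply, RCLike.ofReal_real_eq_id, Function.id_comp] at h0
    exact h0
  set g : Fin d → ℝ := sv A with hgdef
  have hgsq : ∀ i, g i ^ 2 = hH.eigenvalues i := fun i => Real.sq_sqrt (hlamnn i)
  have hgpos : ∀ i, 0 < g i := h
  set U : Matrix (Fin d) (Fin d) ℝ := A * V * Matrix.diagonal (fun i => (g i)⁻¹) with hUdef
  have c2 : ∀ X : Matrix (Fin d) (Fin d) ℝ, Vᵀ * (V * X) = X := fun X => by
    rw [← Matrix.mul_assoc, hV1, one_mul]
  have hU1 : Uᵀ * U = 1 := by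
    have expand : Uᵀ * U = (Matrix.diagonal fun i => (g i)⁻¹) *
        (Vᵀ * (Aᵀ * A * (V * Matrix.diagonal fun i => (g i)⁻¹))) := by
      rw [hUdef]
      simp only [Matrix.transpose_mul, Matrix.diagonal_transpose, Matrix.mul_assoc]
    rw [expand, hspec]
    simp only [Matrix.mul_assoc, c2]
    rw [Matrix.diagonal_mul_diagonal, Matrix.diagonal_mul_diagonal]
    have heq : (fun i => (g i)⁻¹ * (hH.eigenvalues i * (g i)⁻¹)) = fun _ : Fin d => (1:ℝ) := by
      funext i
      rw [← hgsq i, sq]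
      field_simp
      exact div_self (hgpos i).ne'
    rw [heq, Matrix.diagonal_one]
  have hA : A = U * Matrix.diagonal g * Vᵀ := by
    rw [hUdef]
    simp only [Matrix.mul_assoc]
    rw [show Matrix.diagonal (fun i => (g i)⁻¹) * (Matrix.diagonal g * Vᵀ) =
        Vᵀ by
      rw [← Matrix.mul_assoc, Matrix.diagonal_mul_diagonal]
      have : (fun i => (g i)⁻¹ * g i) = fun _ : Fin d => (1:ℝ) :=
        funext fun i => inv_mul_cancel₀ (hgpos i).ne'
      rw [this, Matrix.diagonal_one, one_mul]]
    rw [show V * Vᵀ = 1 from hV1', mul_one]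
  exact ⟨U, V, hU1, hV1, hA⟩

lemma sv_ge_of_smin {A : Matrix (Fin d) (Fin d) ℝ} {c : ℝ} (h : c ≤ smin A) (i : Fin d) :
    c ≤ sv A i :=
  h.trans (ciInf_le ⟨0, by rintro x ⟨j, rfl⟩; exact Real.sqrt_nonneg _⟩ i)

/-- Polar commutes with right multiplication by an orthogonal matrix
(for matrices with positive singular values). -/
lemma block_bound (c : ℝ) (hc : 0 < c) (A B Q : Matrix (Fin d) (Fin d) ℝ)
    (hA : ∀ i, c ≤ sv A i) (hB : ∀ i, c ≤ sv B i) (hQ : IsOrtho Q) :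
    frob (polar A - polar (B * Q)) ≤ (1/c) * frob (A - B * Q) := by
  obtain ⟨U₁, V₁, hU₁, hV₁, hA1⟩ := svd_exists A fun i => hc.trans_le (hA i)
  obtain ⟨U₂, V₂, hU₂, hV₂, hB1⟩ := svd_exists B fun i => hc.trans_le (hB i)
  have hpA : polar A = U₁ * V₁ᵀ :=
    polar_of_svd A U₁ V₁ (sv A) hU₁ hV₁ hA1 fun i => hc.trans_le (hA i)
  have hV₂Q : (Qᵀ * V₂)ᵀ * (Qᵀ * V₂) = 1 := by
    simp only [Matrix.transpose_mul, Matrix.transpose_transpose]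
    rw [Matrix.mul_assoc, ← Matrix.mul_assoc Q Qᵀ V₂, hQ.1, one_mul, hV₂]
  have hBQ : B * Q = U₂ * Matrix.diagonal (sv B) * (Qᵀ * V₂)ᵀ := by
    conv_lhs => rw [hB1]
    simp only [Matrix.transpose_mul, Matrix.transpose_transpose, Matrix.mul_assoc]
  have hpBQ : polar (B * Q) = U₂ * (Qᵀ * V₂)ᵀ :=
    polar_of_svd _ U₂ (Qᵀ * V₂) (sv B) hU₂ hV₂Q hBQ fun i => hc.trans_le (hB i)
  rw [hpA, hpBQ]
  calc frob (U₁ * V₁ᵀ - U₂ * (Qᵀ * V₂)ᵀ)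
      ≤ (1/c) * frob (U₁ * Matrix.diagonal (sv A) * V₁ᵀ -
          U₂ * Matrix.diagonal (sv B) * (Qᵀ * V₂)ᵀ) :=
        svd_bound c hc U₁ V₁ U₂ (Qᵀ * V₂) (sv A) (sv B) hU₁ hV₁ hU₂ hV₂Q hA hB
    _ = (1/c) * frob (A - B * Q) := by rw [← hA1, ← hBQ]

lemma polar_mul_ortho (c : ℝ) (hc : 0 < c) (B Q : Matrix (Fin d) (Fin d) ℝ)
    (hB : ∀ i, c ≤ sv B i) (hQ : IsOrtho Q) :
    polar (B * Q) = polar B * Q := by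
  obtain ⟨U₂, V₂, hU₂, hV₂, hB1⟩ := svd_exists B fun i => hc.trans_le (hB i)
  have hpB : polar B = U₂ * V₂ᵀ :=
    polar_of_svd B U₂ V₂ (sv B) hU₂ hV₂ hB1 fun i => hc.trans_le (hB i)
  have hV₂Q : (Qᵀ * V₂)ᵀ * (Qᵀ * V₂) = 1 := by
    simp only [Matrix.transpose_mul, Matrix.transpose_transpose]
    rw [Matrix.mul_assoc, ← Matrix.mul_assoc Q Qᵀ V₂, hQ.1, one_mul, hV₂]
  have hBQ : B * Q = U₂ * Matrix.diagonal (sv B) * (Qᵀ * V₂)ᵀ := by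
    conv_lhs => rw [hB1]
    simp only [Matrix.transpose_mul, Matrix.transpose_transpose, Matrix.mul_assoc]
  have hpBQ : polar (B * Q) = U₂ * (Qᵀ * V₂)ᵀ :=
    polar_of_svd _ U₂ (Qᵀ * V₂) (sv B) hU₂ hV₂Q hBQ fun i => hc.trans_le (hB i)
  rw [hpBQ, hpB]
  simp only [Matrix.transpose_mul, Matrix.transpose_transpose, Matrix.mul_assoc]

variable {n : ℕ}

lemma blk_sub (M N : Matrix (Fin n × Fin d) (Fin d) ℝ) (i : Fin n) :
    blk (M - N) i = blk M i - blk N i := rfl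

lemma blk_mul (M : Matrix (Fin n × Fin d) (Fin d) ℝ) (Q : Matrix (Fin d) (Fin d) ℝ)
    (i : Fin n) : blk (M * Q) i = blk M i * Q := by
  ext a b
  simp [blk, Matrix.mul_apply]

lemma blk_Pn (W : Matrix (Fin n × Fin d) (Fin d) ℝ) (i : Fin n) :
    blk (Pn W) i = polar (blk W i) := rfl

lemma frob_stack (W : Matrix (Fin n × Fin d) (Fin d) ℝ) :
    frob W = Real.sqrt (∑ i, frob (blk W i) ^ 2) := by
  unfold frob
  congr 1
  rw [Fintype.sum_prod_type]
  refine Finset.sum_congr rfl fun i _ => ?_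
  rw [Real.sq_sqrt (by positivity)]
  rfl

end PnAux

open PnAux in
/-- Blockwise Lipschitz bound for the polar projection `P_n`. -/
theorem Pn_lipschitz (n d : ℕ) (c : ℝ) (hc : 0 < c)
    (X Y : Matrix (Fin n × Fin d) (Fin d) ℝ)
    (hXinv : ∀ i : Fin n, IsUnit (blk X i).det)
    (hYinv : ∀ i : Fin n, IsUnit (blk Y i).det)
    (hXs : ∀ i : Fin n, c ≤ smin (blk X i))
    (hYs : ∀ i : Fin n, c ≤ smin (blk Y i)) :
    (∀ Q : Matrix (Fin d) (Fin d) ℝ, IsOrtho Q →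
      Real.sqrt (∑ i : Fin n,
          frob (polar (blk X i) - polar (blk (Y * Q) i)) ^ 2) ≤
        4 / (2 * c) * 2 * frob (X - Y * Q)) ∧
    dF (Pn X) (Pn Y) ≤ (4 / c) * dF X Y := by
  have h14 : (1:ℝ)/c ≤ 4/c := by
    rw [div_le_div_iff₀ hc hc]; nlinarith
  -- main per-Q bound
  have key : ∀ Q : Matrix (Fin d) (Fin d) ℝ, IsOrtho Q →
      Real.sqrt (∑ i : Fin n, frob (polar (blk X i) - polar (blk (Y * Q) i)) ^ 2) ≤
        (1/c) * frob (X - Y * Q) := by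
    intro Q hQ
    have hsum : ∑ i : Fin n, frob (polar (blk X i) - polar (blk (Y * Q) i)) ^ 2 ≤
        ∑ i : Fin n, ((1/c) * frob (blk (X - Y * Q) i)) ^ 2 := by
      refine Finset.sum_le_sum fun i _ => ?_
      have hb := block_bound c hc (blk X i) (blk Y i) Q
        (sv_ge_of_smin (hXs i)) (sv_ge_of_smin (hYs i)) hQ
      rw [show blk (Y * Q) i = blk Y i * Q from blk_mul Y Q i,
        show blk (X - Y * Q) i = blk X i - blk Y i * Q by rw [blk_sub, blk_mul]]
      exact pow_le_pow_left₀ (frob_nonneg _) hb 2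
    calc Real.sqrt (∑ i : Fin n, frob (polar (blk X i) - polar (blk (Y * Q) i)) ^ 2)
        ≤ Real.sqrt (∑ i : Fin n, ((1/c) * frob (blk (X - Y * Q) i)) ^ 2) :=
          Real.sqrt_le_sqrt hsum
      _ = (1/c) * frob (X - Y * Q) := by
          have h1 : ∑ i : Fin n, ((1/c) * frob (blk (X - Y * Q) i)) ^ 2 =
              (1/c)^2 * ∑ i : Fin n, frob (blk (X - Y * Q) i) ^ 2 := by
            rw [Finset.mul_sum]
            exact Finset.sum_congr rfl fun i _ => by ring
          rw [h1, Real.sqrt_mul (by positivity), Real.sqrt_sq (by positivity),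
            frob_stack (X - Y * Q)]
  constructor
  · intro Q hQ
    refine (key Q hQ).trans ?_
    have h2 : 4 / (2*c) * 2 = 4/c := by field_simp
    rw [h2]
    exact mul_le_mul_of_nonneg_right h14 (frob_nonneg _)
  · -- dF part
    have hOrtho1 : IsOrtho (1 : Matrix (Fin d) (Fin d) ℝ) := ⟨by simp, by simp⟩
    have hne : {r : ℝ | ∃ Q : Matrix (Fin d) (Fin d) ℝ,
        IsOrtho Q ∧ r = frob (X - Y * Q)}.Nonempty :=
      ⟨frob (X - Y * 1), 1, hOrtho1, rfl⟩
    have hbdd : BddBelow {r : ℝ | ∃ Q : Matrix (Fin d) (Fin d) ℝ,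
        IsOrtho Q ∧ r = frob (Pn X - Pn Y * Q)} := by
      refine ⟨0, ?_⟩
      rintro x ⟨Q, hQ, rfl⟩
      exact frob_nonneg _
    have hmain : ∀ Q : Matrix (Fin d) (Fin d) ℝ, IsOrtho Q →
        frob (Pn X - Pn Y * Q) ≤ (1/c) * frob (X - Y * Q) := by
      intro Q hQ
      have hPnQ : Pn Y * Q = Pn (Y * Q) := by
        ext p b
        obtain ⟨i, a⟩ := p
        have h1 : polar (blk Y i) * Q = polar (blk Y i * Q) :=
          (polar_mul_ortho c hc (blk Y i) Q (sv_ge_of_smin (hYs i)) hQ).symm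
        calc (Pn Y * Q) (i, a) b = (polar (blk Y i) * Q) a b := by
              simp [Pn, Matrix.mul_apply, blk]
          _ = polar (blk Y i * Q) a b := by rw [h1]
          _ = Pn (Y * Q) (i, a) b := by rw [← blk_mul]; rfl
      rw [hPnQ]
      have hstack : frob (Pn X - Pn (Y * Q)) =
          Real.sqrt (∑ i : Fin n, frob (polar (blk X i) - polar (blk (Y * Q) i)) ^ 2) := by
        rw [frob_stack]
        congr 1
      rw [hstack]
      exact key Q hQ
    have hstep : ∀ r ∈ {r : ℝ | ∃ Q : Matrix (Fin d) (Fin d) ℝ,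
        IsOrtho Q ∧ r = frob (X - Y * Q)}, dF (Pn X) (Pn Y) ≤ (4/c) * r := by
      rintro r ⟨Q, hQ, rfl⟩
      have h1 : dF (Pn X) (Pn Y) ≤ frob (Pn X - Pn Y * Q) :=
        csInf_le hbdd ⟨Q, hQ, rfl⟩
      refine h1.trans ((hmain Q hQ).trans ?_)
      exact mul_le_mul_of_nonneg_right h14 (frob_nonneg _)
    have h2 : (c/4) * dF (Pn X) (Pn Y) ≤ dF X Y := by
      refine le_csInf hne fun r hr => ?_
      have h5 := mul_le_mul_of_nonneg_left (hstep r hr) (by positivity : (0:ℝ) ≤ c/4)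
      have h6 : c/4 * (4/c * r) = r := by field_simp
      linarith
    have h3 : (4/c) * ((c/4) * dF (Pn X) (Pn Y)) = dF (Pn X) (Pn Y) := by
      field_simp
    calc dF (Pn X) (Pn Y) = (4/c) * ((c/4) * dF (Pn X) (Pn Y)) := h3.symm
      _ ≤ (4/c) * dF X Y := mul_le_mul_of_nonneg_left h2 (by positivity)
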